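/- For every positive integer n, sum_{m=1}^infty (-1)^{m+1} * 2n / ((m+1)(m+2n+1)) * H_m = 2*ln(2) * sum_{k=0}^{n-1} 1/(2k+1) - sum_{j=1}^{2n} (1/j) * sum_{k=1}^j (-1)^{k-1}/k. -/

import Mathlib

open scoped BigOperators

noncomputable def H (n : ℕ) : ℝ := ∑ k ∈ Finset.range n, (1 : ℝ) / (k + 1)

noncomputable def h : ℕ → ℕ → ℝ
  | 0, n => 1 / n
  | r + 1, n => ∑ k ∈ Finset.range n, h r (k + 1)

noncomputable def zeta (m : ℕ) : ℝ := ∑' n : ℕ, (1 : ℝ) / ((n : ℝ) + 1) ^ m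

noncomputable def hzeta (m k : ℕ) : ℝ := ∑' j : ℕ, (1 : ℝ) / ((j : ℝ) + k) ^ m

noncomputable def zetaH (m : ℕ) : ℝ := ∑' n : ℕ, H (n + 1) / ((n : ℝ) + 1) ^ m

def stirling1 : ℕ → ℕ → ℕ
  | 0, 0 => 1
  | 0, _ + 1 => 0
  | _ + 1, 0 => 0
  | n + 1, k + 1 => stirling1 n k + n * stirling1 n (k + 1)

open Filter Topology Finset

noncomputable def av (m : ℕ) : ℝ := (-1)^m / (m+1)
noncomputable def PP (N : ℕ) : ℝ := ∑ i ∈ Finset.range N, av i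

lemma PP_two_mul (N : ℕ) : PP (2*N) = (harmonic (2*N) : ℝ) - (harmonic N : ℝ) := by
  induction N with
  | zero => simp [PP]
  | succ N ih =>
    have h2 : 2*(N+1) = (2*N+1)+1 := by ring
    rw [h2, PP, Finset.sum_range_succ, Finset.sum_range_succ, ← PP, ih]
    rw [show (2*N+1+1) = (2*N+1)+1 from rfl, harmonic_succ, harmonic_succ, harmonic_succ]
    push_cast
    rw [av, av]
    have he : ((-1:ℝ))^(2*N) = 1 := by rw [pow_mul]; norm_num
    have h3 : ((-1:ℝ))^(2*N+1) = -1 := by rw [pow_succ, he]; ring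
    rw [he, h3]
    field_simp
    push_cast
    ring

lemma tendsto_PP : Tendsto PP atTop (𝓝 (Real.log 2)) := by
  obtain ⟨l, hl⟩ := Antitone.tendsto_alternating_series_of_tendsto_zero
    (f := fun i : ℕ => 1/((i:ℝ)+1))
    (fun a b hab => by
      apply one_div_le_one_div_of_le (by positivity)
      exact_mod_cast Nat.succ_le_succ hab)
    tendsto_one_div_add_atTop_nhds_zero_nat
  have hPl : Tendsto PP atTop (𝓝 l) := by
    refine hl.congr fun N => ?_
    exact Finset.sum_congr rfl fun i _ => by rw [av]; ring
  have h2 : Tendsto (fun N : ℕ => 2*N) atTop atTop :=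
    tendsto_atTop_atTop.mpr fun b => ⟨b, fun a ha => by omega⟩
  have hsub : Tendsto (fun N => PP (2*N)) atTop (𝓝 l) := hPl.comp h2
  have hsub2 : Tendsto (fun N => PP (2*N)) atTop (𝓝 (Real.log 2)) := by
    have hγ := Real.tendsto_harmonic_sub_log
    have hγ2 : Tendsto (fun N : ℕ => (harmonic (2*N) : ℝ) - Real.log (2*N)) atTop
        (𝓝 Real.eulerMascheroniConstant) := by
      have := hγ.comp h2
      refine this.congr fun N => ?_
      simp only [Function.comp]; push_cast; ring_nf
    have key : Tendsto (fun N : ℕ => ((harmonic (2*N) : ℝ) - Real.log (2*N)) -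
        ((harmonic N : ℝ) - Real.log N) + Real.log 2) atTop (𝓝 (Real.log 2)) := by
      have := (hγ2.sub hγ).add_const (Real.log 2)
      simpa using this
    refine key.congr' ?_
    filter_upwards [eventually_ge_atTop 1] with N hN
    rw [PP_two_mul]
    have hN0 : (N:ℝ) ≠ 0 := Nat.cast_ne_zero.mpr (by omega)
    have : Real.log (2*N) = Real.log 2 + Real.log N := by
      rw [← Real.log_mul (by norm_num) hN0]
    rw [this]
    ring
  have := tendsto_nhds_unique hsub hsub2
  rwa [this] at hPl

lemma hsum2 : Summable (fun m : ℕ => 1/((m:ℝ)+1)^2) := by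
  have := (summable_nat_add_iff (f := fun n : ℕ => 1/(n:ℝ)^2) 1).2
    (Real.summable_one_div_nat_pow.2 one_lt_two)
  refine this.congr fun m => ?_
  push_cast; ring

lemma av_diff_eq (c d m : ℕ) : av (m+c) - (-1:ℝ)^d * av (m+c+d) =
    (-1:ℝ)^(m+c) * (1/((m:ℝ)+c+1) - 1/((m:ℝ)+c+d+1)) := by
  have hne1 : ((m:ℝ)+c+1) ≠ 0 := by positivity
  have hne2 : ((m:ℝ)+c+d+1) ≠ 0 := by positivity
  rcases Nat.even_or_odd d with hd | hd
  · rw [av, av, hd.neg_one_pow, pow_add, pow_add, hd.neg_one_pow]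
    push_cast; field_simp; ring
  · rw [av, av, hd.neg_one_pow, pow_add, pow_add, hd.neg_one_pow]
    push_cast; field_simp; ring

lemma av_diff_bound (c d m : ℕ) :
    |av (m+c) - (-1:ℝ)^d * av (m+c+d)| ≤ d * (1/((m:ℝ)+1)^2) := by
  rw [av_diff_eq, abs_mul, abs_pow, abs_neg, abs_one, one_pow, one_mul]
  have h1 : (0:ℝ) < (m:ℝ)+c+1 := by positivity
  have h2 : (0:ℝ) < (m:ℝ)+c+d+1 := by positivity
  have hle : 1/((m:ℝ)+c+d+1) ≤ 1/((m:ℝ)+c+1) := by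
    apply one_div_le_one_div_of_le h1; linarith
  rw [abs_of_nonneg (by linarith)]
  rw [div_sub_div _ _ (ne_of_gt h1) (ne_of_gt h2)]
  have hnum : 1 * ((m:ℝ)+c+d+1) - ((m:ℝ)+c+1) * 1 = d := by ring
  rw [hnum]
  rw [div_le_iff₀ (by positivity)]
  have hmm : (0:ℝ) < ((m:ℝ)+1)^2 := by positivity
  have hcmp : (d:ℝ) * (((m:ℝ)+1)^2) ≤ (d:ℝ) * (((m:ℝ)+c+1) * ((m:ℝ)+c+d+1)) := by
    apply mul_le_mul_of_nonneg_left _ (Nat.cast_nonneg d)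
    nlinarith [Nat.cast_nonneg c (α := ℝ), Nat.cast_nonneg d (α := ℝ), Nat.cast_nonneg m (α := ℝ)]
  calc (d:ℝ) = (d:ℝ) * 1 := by ring
    _ ≤ (d:ℝ) * (1/((m:ℝ)+1)^2) * (((m:ℝ)+c+1) * ((m:ℝ)+c+d+1)) := by
        rw [mul_one_div, div_mul_eq_mul_div, le_div_iff₀ hmm]
        calc (d:ℝ) * 1 * ((m:ℝ)+1)^2 = (d:ℝ) * ((m:ℝ)+1)^2 := by ring
          _ ≤ (d:ℝ) * (((m:ℝ)+c+1) * ((m:ℝ)+c+d+1)) := hcmp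

lemma telesc_summable (c d : ℕ) :
    Summable (fun m : ℕ => av (m+c) - (-1:ℝ)^d * av (m+c+d)) := by
  rw [← summable_abs_iff]
  exact Summable.of_nonneg_of_le (fun m => abs_nonneg _) (fun m => av_diff_bound c d m)
    (hsum2.mul_left (d:ℝ))

lemma telesc (c d : ℕ) :
    HasSum (fun m : ℕ => av (m+c) - (-1:ℝ)^d * av (m+c+d))
      ((Real.log 2 - PP c) - (-1:ℝ)^d * (Real.log 2 - PP (c+d))) := by
  rw [(telesc_summable c d).hasSum_iff_tendsto_nat]
  have hps : ∀ N : ℕ, ∑ m ∈ range N, (av (m+c) - (-1:ℝ)^d * av (m+c+d)) =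
      (PP (c+N) - PP c) - (-1:ℝ)^d * (PP (c+d+N) - PP (c+d)) := by
    intro N
    rw [Finset.sum_sub_distrib]
    have e1 : ∑ m ∈ range N, av (m+c) = PP (c+N) - PP c := by
      rw [PP, PP, Finset.sum_range_add]
      simp [add_comm c]
    have e2 : ∑ m ∈ range N, (-1:ℝ)^d * av (m+c+d) = (-1:ℝ)^d * (PP (c+d+N) - PP (c+d)) := by
      rw [← Finset.mul_sum]
      congr 1
      rw [PP, PP, Finset.sum_range_add]
      have hco : ∀ m, m + c + d = c + d + m := fun m => by omega
      simp only [hco]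
      ring
    rw [e1, e2]
  simp only [hps]
  have h1 : Tendsto (fun N : ℕ => PP (c+N)) atTop (𝓝 (Real.log 2)) := by
    have := tendsto_PP.comp (tendsto_add_atTop_nat c)
    refine this.congr fun N => ?_
    simp [Function.comp, add_comm]
  have h2 : Tendsto (fun N : ℕ => PP (c+d+N)) atTop (𝓝 (Real.log 2)) := by
    have := tendsto_PP.comp (tendsto_add_atTop_nat (c+d))
    refine this.congr fun N => ?_
    simp [Function.comp, add_comm]
  exact ((h1.sub_const _).sub (((h2.sub_const _)).const_mul _))

lemma H_nonneg (m : ℕ) : 0 ≤ H m :=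
  Finset.sum_nonneg fun k _ => by positivity

lemma H_le (m : ℕ) : H m ≤ 2 * Real.sqrt m := by
  induction m with
  | zero => simp [H]
  | succ m ih =>
    rw [H, Finset.sum_range_succ, ← H]
    have ha : Real.sqrt m ^ 2 = m := Real.sq_sqrt (Nat.cast_nonneg m)
    have hb : Real.sqrt ((m:ℝ)+1) ^ 2 = (m:ℝ)+1 :=
      Real.sq_sqrt (by positivity : (0:ℝ) ≤ (m:ℝ)+1)
    have ha0 : 0 ≤ Real.sqrt m := Real.sqrt_nonneg _
    have hb0 : 0 ≤ Real.sqrt ((m:ℝ)+1) := Real.sqrt_nonneg _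
    have hab : Real.sqrt m ≤ Real.sqrt ((m:ℝ)+1) := by
      apply Real.sqrt_le_sqrt; linarith
    have h1 : (0:ℝ) < (m:ℝ)+1 := by positivity
    have hbound : Real.sqrt ((m:ℝ)+1) + Real.sqrt m ≤ 2*((m:ℝ)+1) := by
      nlinarith [sq_nonneg (Real.sqrt ((m:ℝ)+1) - 1), sq_nonneg (Real.sqrt (m:ℝ) - 1)]
    have hprod : (Real.sqrt ((m:ℝ)+1) - Real.sqrt m)*(Real.sqrt ((m:ℝ)+1) + Real.sqrt m) = 1 := by
      nlinarith
    have key : 1/((m:ℝ)+1) ≤ 2*(Real.sqrt ((m:ℝ)+1) - Real.sqrt m) := by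
      rw [div_le_iff₀ h1]
      nlinarith [mul_le_mul_of_nonneg_right hbound (sub_nonneg.2 hab)]
    have hc : Real.sqrt ((m+1:ℕ):ℝ) = Real.sqrt ((m:ℝ)+1) := by push_cast; ring_nf
    rw [hc]
    have hc2 : ((m:ℕ):ℝ) + 1 = (m:ℝ)+1 := rfl
    linarith
lemma diff_eq (n m : ℕ) : av (m+1+2*n) - av (m+1) =
    (-1:ℝ)^m * (1/((m:ℝ)+2) - 1/((m:ℝ)+2*n+2)) := by
  have h := av_diff_eq 1 (2*n) m
  rw [Even.neg_one_pow (even_two_mul n), one_mul] at h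
  push_cast at h
  linear_combination (-1 : ℝ) * h

lemma Ecol (r : ℕ) : HasSum (fun i : ℕ => -(av (i+1+r)) / ((i:ℝ)+1))
    (((-1:ℝ)^r/((r:ℝ)+1)) * (Real.log 2 - (-1:ℝ)^(r+1) * (Real.log 2 - PP (r+1)))) := by
  have h := (telesc 0 (r+1)).mul_left ((-1:ℝ)^r/((r:ℝ)+1))
  have hPP0 : PP 0 = 0 := by simp [PP]
  rw [hPP0, sub_zero, zero_add] at h
  refine HasSum.congr_fun h fun i => ?_
  simp only [Nat.add_zero]
  have hre : i + (r+1) = i+1+r := by omega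
  rw [hre]
  have hi1 : ((i:ℝ)+1) ≠ 0 := by positivity
  have hir : ((i:ℝ)+1+r+1) ≠ 0 := by positivity
  have hr1 : ((r:ℝ)+1) ≠ 0 := by positivity
  rw [av, av]
  push_cast
  rcases Nat.even_or_odd r with hrp | hrp
  · rw [show ((-1:ℝ))^(i+1+r) = ((-1:ℝ))^(i+1) * ((-1:ℝ))^r from pow_add _ _ _,
      hrp.neg_one_pow, (hrp.add_one).neg_one_pow]
    field_simp
    ring
  · rw [show ((-1:ℝ))^(i+1+r) = ((-1:ℝ))^(i+1) * ((-1:ℝ))^r from pow_add _ _ _,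
      hrp.neg_one_pow, (hrp.add_one).neg_one_pow]
    field_simp
    ring

noncomputable def FF (n : ℕ) : ℕ × ℕ → ℝ := fun p =>
  if p.2 ≤ p.1 then (av (p.1+1+2*n) - av (p.1+1)) / ((p.2:ℝ)+1) else 0

lemma FF_row_abs (n m : ℕ) :
    ∑' i, |FF n (m, i)| = |av (m+1+2*n) - av (m+1)| * H (m+1) := by
  rw [tsum_eq_sum (s := Finset.range (m+1)) (fun i hi => by
    have : ¬ i ≤ m := by simpa using hi
    simp [FF, this])]
  rw [H, Finset.mul_sum]
  refine Finset.sum_congr rfl fun i hi => ?_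
  have hi' : i ≤ m := Nat.lt_succ_iff.1 (Finset.mem_range.1 hi)
  rw [FF]
  simp only [hi', if_pos]
  rw [abs_div, abs_of_pos (by positivity : (0:ℝ) < (i:ℝ)+1)]
  ring

lemma FF_row (n m : ℕ) :
    ∑' i, FF n (m, i) = (av (m+1+2*n) - av (m+1)) * H (m+1) := by
  rw [tsum_eq_sum (s := Finset.range (m+1)) (fun i hi => by
    have : ¬ i ≤ m := by simpa using hi
    simp [FF, this])]
  rw [H, Finset.mul_sum]
  refine Finset.sum_congr rfl fun i hi => ?_
  have hi' : i ≤ m := Nat.lt_succ_iff.1 (Finset.mem_range.1 hi)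
  rw [FF]
  simp only [hi', if_pos]
  ring

lemma rpow_bound (n m : ℕ) :
    |av (m+1+2*n) - av (m+1)| * H (m+1) ≤ (4*(n:ℝ)) * ((m:ℝ)+1) ^ (-(3/2) : ℝ) := by
  have hd : |av (m+1+2*n) - av (m+1)| ≤ (2*n) * (1/((m:ℝ)+1)^2) := by
    have h := av_diff_bound 1 (2*n) m
    rw [Even.neg_one_pow (even_two_mul n), one_mul] at h
    rw [abs_sub_comm] at h
    calc |av (m+1+2*n) - av (m+1)| ≤ ((2*n : ℕ):ℝ) * (1/((m:ℝ)+1)^2) := h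
      _ = (2*(n:ℝ)) * (1/((m:ℝ)+1)^2) := by push_cast; ring
  have hH : H (m+1) ≤ 2 * Real.sqrt ((m:ℝ)+1) := by
    have := H_le (m+1)
    have hc : ((m+1:ℕ):ℝ) = (m:ℝ)+1 := by push_cast; ring
    rwa [hc] at this
  have hx : (0:ℝ) < (m:ℝ)+1 := by positivity
  have key : Real.sqrt ((m:ℝ)+1) / ((m:ℝ)+1)^2 = ((m:ℝ)+1) ^ (-(3/2) : ℝ) := by
    rw [Real.sqrt_eq_rpow, ← Real.rpow_natCast ((m:ℝ)+1) 2, ← Real.rpow_sub hx]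
    norm_num
  calc |av (m+1+2*n) - av (m+1)| * H (m+1)
      ≤ ((2*(n:ℝ)) * (1/((m:ℝ)+1)^2)) * (2 * Real.sqrt ((m:ℝ)+1)) := by
        apply mul_le_mul hd hH (H_nonneg _) (by positivity)
    _ = (4*(n:ℝ)) * (Real.sqrt ((m:ℝ)+1) / ((m:ℝ)+1)^2) := by ring
    _ = (4*(n:ℝ)) * ((m:ℝ)+1) ^ (-(3/2) : ℝ) := by rw [key]

lemma rpow_summable : Summable (fun m : ℕ => ((m:ℝ)+1) ^ (-(3/2) : ℝ)) := by
  have h0 : Summable (fun m : ℕ => ((m:ℝ)) ^ (-(3/2) : ℝ)) :=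
    Real.summable_nat_rpow.mpr (by norm_num)
  have := (summable_nat_add_iff (f := fun m : ℕ => ((m:ℝ)) ^ (-(3/2) : ℝ)) 1).2 h0
  refine this.congr fun m => ?_
  push_cast
  ring_nf

lemma FF_summable (n : ℕ) : Summable (FF n) := by
  rw [← summable_abs_iff]
  refine (summable_prod_of_nonneg (fun p => abs_nonneg _)).2 ⟨fun m => ?_, ?_⟩
  · exact summable_of_ne_finset_zero (s := Finset.range (m+1)) (fun i hi => by
      have : ¬ i ≤ m := by simpa using hi
      simp [FF, this])
  · refine Summable.of_nonneg_of_le (fun m => tsum_nonneg fun i => abs_nonneg _)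
      (fun m => ?_) ((rpow_summable).mul_left (4*(n:ℝ)))
    rw [FF_row_abs]
    exact rpow_bound n m

lemma heven_aux (L : ℝ) (n : ℕ) :
    ∑ r ∈ range (2*n), (if Even r then 2*L/((r:ℝ)+1) else 0)
      = 2*L*∑ k ∈ range n, (1:ℝ)/(2*(k:ℝ)+1) := by
  induction n with
  | zero => simp
  | succ n ih =>
    rw [show 2*(n+1) = (2*n+1)+1 from by ring, Finset.sum_range_succ, Finset.sum_range_succ,
      ih, Finset.sum_range_succ]
    rw [if_pos (even_two_mul n), if_neg (by simp [Nat.even_add_one, even_two_mul])]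
    push_cast
    ring

lemma inner_eq (j : ℕ) : ∑ k ∈ Finset.Icc 1 j, ((-1:ℝ))^(k-1)/(k:ℝ) = PP j := by
  rw [← Finset.Ico_add_one_right_eq_Icc, Finset.sum_Ico_eq_sum_range]
  norm_num
  rw [PP]
  refine Finset.sum_congr rfl fun t _ => ?_
  rw [av]
  ring_nf

lemma hodd_aux (n : ℕ) :
    ∑ r ∈ range (2*n), PP (r+1)/((r:ℝ)+1)
      = ∑ j ∈ Finset.Icc 1 (2*n), (1/(j:ℝ)) * ∑ k ∈ Finset.Icc 1 j, ((-1:ℝ))^(k-1)/(k:ℝ) := by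
  rw [← Finset.Ico_add_one_right_eq_Icc, Finset.sum_Ico_eq_sum_range]
  norm_num
  refine Finset.sum_congr rfl fun r _ => ?_
  rw [inner_eq, show 1+r = r+1 from by omega]
  ring

theorem stmt19 (n : ℕ) (hn : 1 ≤ n) :
    ∑' m : ℕ, (-1 : ℝ) ^ (m + 2) * (2 * n) /
        (((m : ℝ) + 2) * ((m : ℝ) + 1 + 2 * n + 1)) * H (m + 1) =
      2 * Real.log 2 * ∑ k ∈ Finset.range n, (1 : ℝ) / (2 * k + 1) -
        ∑ j ∈ Finset.Icc 1 (2 * n),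
          (1 / (j : ℝ)) * ∑ k ∈ Finset.Icc 1 j, (-1 : ℝ) ^ (k - 1) / k := by
  set L := Real.log 2 with hL
  have step0 : ∀ m : ℕ, (-1 : ℝ) ^ (m + 2) * (2 * n) /
      (((m : ℝ) + 2) * ((m : ℝ) + 1 + 2 * n + 1)) * H (m + 1)
      = (av (m+1+2*n) - av (m+1)) * H (m+1) := by
    intro m
    rw [diff_eq]
    congr 1
    have h1 : ((m:ℝ)+2) ≠ 0 := by positivity
    have h2 : ((m:ℝ)+1+2*n+1) ≠ 0 := by positivity
    have h3 : ((m:ℝ)+2*n+2) ≠ 0 := by positivity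
    have hp : ((-1:ℝ))^(m+2) = (-1:ℝ)^m := by
      rw [pow_add]; norm_num
    rw [hp]
    have key : 1/((m:ℝ)+2) - 1/((m:ℝ)+2*n+2)
        = 2*(n:ℝ) / (((m:ℝ)+2)*((m:ℝ)+1+2*(n:ℝ)+1)) := by
      rw [div_sub_div _ _ h1 h3]
      congr 1 <;> ring
    rw [key]
    ring
  rw [tsum_congr step0]
  have hF := FF_summable n
  have e1 : ∑' m, (av (m+1+2*n) - av (m+1)) * H (m+1) = ∑' m, ∑' i, FF n (m, i) :=
    tsum_congr fun m => (FF_row n m).symm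
  have hunc : Summable (Function.uncurry fun m i => FF n (m, i)) := hF
  have e2 : ∑' m, ∑' i, FF n (m, i) = ∑' i, ∑' m, FF n (m, i) :=
    (Summable.tsum_comm' hunc (fun m => hF.prod_factor m)
      (fun i => (hF.prod_symm.prod_factor i : Summable fun c => FF n (c, i)))).symm
  have hcol : ∀ i : ℕ, HasSum (fun m => FF n (m, i))
      ((PP (i+1) - PP (i+1+2*n)) / ((i:ℝ)+1)) := by
    intro i
    have t := telesc (i+1) (2*n)
    rw [Even.neg_one_pow (even_two_mul n)] at t
    simp only [one_mul] at t
    have t2 := (t.neg).div_const ((i:ℝ)+1)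
    have hval : -((L - PP (i+1)) - (L - PP (i+1+2*n))) / ((i:ℝ)+1)
        = (PP (i+1) - PP (i+1+2*n)) / ((i:ℝ)+1) := by ring
    rw [hval] at t2
    have hinj : Function.Injective (fun m : ℕ => m + i) := fun a b hab => Nat.add_right_cancel hab
    refine (Function.Injective.hasSum_iff hinj ?_).1 ?_
    · intro x hx
      have hxi : ¬ i ≤ x := by
        intro hle
        exact hx ⟨x - i, Nat.sub_add_cancel hle⟩
      simp [FF, hxi]
    · refine HasSum.congr_fun t2 fun m => ?_
      simp only [Function.comp]
      have hmi : i ≤ m + i := Nat.le_add_left i m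
      simp only [FF, hmi, if_pos]
      rw [neg_sub]
      rfl
  have e3 : ∑' i, ∑' m, FF n (m, i)
      = ∑' i, ∑ r ∈ range (2*n), (-(av (i+1+r)) / ((i:ℝ)+1)) := by
    refine tsum_congr fun i => ?_
    rw [(hcol i).tsum_eq]
    rw [show PP (i+1+2*n) = PP (i+1) + ∑ r ∈ range (2*n), av (i+1+r) from by
      rw [PP, PP, Finset.sum_range_add]]
    rw [show PP (i+1) - (PP (i+1) + ∑ r ∈ range (2*n), av (i+1+r))
      = -∑ r ∈ range (2*n), av (i+1+r) from by ring]
    rw [neg_div, ← Finset.sum_div, Finset.sum_neg_distrib]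
    simp only [neg_div]
  have e4 : ∑' i, ∑ r ∈ range (2*n), (-(av (i+1+r)) / ((i:ℝ)+1))
      = ∑ r ∈ range (2*n), ∑' i, (-(av (i+1+r)) / ((i:ℝ)+1)) :=
    Summable.tsum_finsetSum (fun r _ => (Ecol r).summable)
  have e5 : ∀ r : ℕ, ∑' i, (-(av (i+1+r)) / ((i:ℝ)+1))
      = ((-1:ℝ)^r/((r:ℝ)+1)) * (L - (-1:ℝ)^(r+1) * (L - PP (r+1))) := fun r => (Ecol r).tsum_eq
  have hV : ∀ r : ℕ, ((-1:ℝ)^r/((r:ℝ)+1)) * (L - (-1:ℝ)^(r+1) * (L - PP (r+1)))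
      = (if Even r then 2*L/((r:ℝ)+1) else 0) - PP (r+1)/((r:ℝ)+1) := by
    intro r
    rcases Nat.even_or_odd r with hrp | hrp
    · rw [if_pos hrp, hrp.neg_one_pow, (hrp.add_one).neg_one_pow]
      ring
    · rw [if_neg (Nat.not_even_iff_odd.mpr hrp), hrp.neg_one_pow,
        (hrp.add_one).neg_one_pow]
      ring
  rw [e1, e2, e3, e4]
  rw [Finset.sum_congr rfl fun r _ => (e5 r).trans (hV r)]
  rw [Finset.sum_sub_distrib, heven_aux, hodd_aux]
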